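/- Let ι be a nonempty finite type, s : ι → EuclideanSpace ℝ (Fin d) a family of points, k ≥ 1 an integer, and for each i < k let w_i : ι → ℕ be a weight function with positive total weight W_i = Σ_j w_i j ≥ 1; let μ_i = (1/W_i) · Σ_j (w_i j : ℝ) • s j and V_i = Σ_j (w_i j : ℝ) · ‖s j − μ_i‖². Then for every real ε > 0 and every integer m with m > 1/ε, there exist tuples r_1, …, r_k : Fin m → ι such that Σ_{i<k} Σ_j (w_i j : ℝ) · ‖s j − μ(r_i)‖² ≤ (1 + ε) · Σ_{i<k} V_i, where μ(r_i) = (1/m) · Σ_{t<m} s (r_i t). In other words, replacing the optimal centroid of each cluster of a weighted k-clustering by the centroid of a suitable multiset of m points drawn from the input increases the total k-means cost by a factor of at most 1 + ε. -/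

import Mathlib

/-- The total weight `W = Σ_i w i`. -/
noncomputable def totalWeight {ι : Type*} [Fintype ι] (w : ι → ℕ) : ℝ :=
  ∑ i, (w i : ℝ)

/-- The weighted mean `μ_w = (1/W) · Σ_i w i • s i`. -/
noncomputable def weightedMean {d : ℕ} {ι : Type*} [Fintype ι]
    (s : ι → EuclideanSpace ℝ (Fin d)) (w : ι → ℕ) : EuclideanSpace ℝ (Fin d) :=
  (1 / totalWeight w) • ∑ i, (w i : ℝ) • s i

/-- The total weighted squared distance to the weighted mean,
`V = Σ_i w i · ‖s i − μ_w‖²`. -/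
noncomputable def weightedVar {d : ℕ} {ι : Type*} [Fintype ι]
    (s : ι → EuclideanSpace ℝ (Fin d)) (w : ι → ℕ) : ℝ :=
  ∑ i, (w i : ℝ) * ‖s i - weightedMean s w‖ ^ 2

/-- The probability mass function `f(i) = w i / W`. -/
noncomputable def pmfWeight {ι : Type*} [Fintype ι] (w : ι → ℕ) (i : ι) : ℝ :=
  (w i : ℝ) / totalWeight w

/-- The product probability mass on `Fin m → ι` under which the `m` coordinates
are independent samples distributed according to `pmfWeight w`. -/
noncomputable def prodProb {ι : Type*} [Fintype ι] (w : ι → ℕ) {m : ℕ}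
    (r : Fin m → ι) : ℝ :=
  ∏ j, pmfWeight w (r j)

/-- The sample mean `μ(r) = (1/m) · Σ_j s (r j)`. -/
noncomputable def sampleMean {d : ℕ} {ι : Type*} {m : ℕ}
    (s : ι → EuclideanSpace ℝ (Fin d)) (r : Fin m → ι) : EuclideanSpace ℝ (Fin d) :=
  (1 / (m : ℝ)) • ∑ j, s (r j)

open scoped RealInnerProductSpace

section Aux

variable {d : ℕ} {ι : Type*} [Fintype ι]

lemma totalWeight_pos {w : ι → ℕ} (hw : 1 ≤ ∑ j, w j) : (0:ℝ) < totalWeight w := by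
  have : (1:ℝ) ≤ totalWeight w := by
    unfold totalWeight
    have := hw
    push_cast [totalWeight]
    exact_mod_cast hw
  linarith

lemma pmfWeight_nonneg {w : ι → ℕ} (hw : 1 ≤ ∑ j, w j) (j : ι) : 0 ≤ pmfWeight w j :=
  div_nonneg (Nat.cast_nonneg _) (totalWeight_pos hw).le

lemma pmfWeight_sum {w : ι → ℕ} (hw : 1 ≤ ∑ j, w j) : ∑ j, pmfWeight w j = 1 := by
  unfold pmfWeight
  rw [← Finset.sum_div]
  exact div_self (totalWeight_pos hw).ne'

lemma prodProb_nonneg {w : ι → ℕ} (hw : 1 ≤ ∑ j, w j) {m : ℕ} (r : Fin m → ι) :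
    0 ≤ prodProb w r :=
  Finset.prod_nonneg fun j _ => pmfWeight_nonneg hw _

lemma sum_prodProb {w : ι → ℕ} (hw : 1 ≤ ∑ j, w j) (m : ℕ) :
    ∑ r : Fin m → ι, prodProb w r = 1 := by
  induction m with
  | zero => simp [prodProb]
  | succ m ih =>
    rw [← Equiv.sum_comp (Fin.consEquiv (fun _ : Fin (m+1) => ι))
      (fun r => prodProb w r), Fintype.sum_prod_type]
    have : ∀ (j : ι) (r : Fin m → ι),
        prodProb w (Fin.consEquiv (fun _ : Fin (m+1) => ι) (j, r))
          = pmfWeight w j * prodProb w r := by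
      intro j r
      simp [prodProb, Fin.prod_univ_succ, Fin.consEquiv]
    simp only [this, ← Finset.mul_sum, ih, mul_one, pmfWeight_sum hw]

lemma sum_w_smul_sub {w : ι → ℕ} (hw : 1 ≤ ∑ j, w j) (s : ι → EuclideanSpace ℝ (Fin d)) :
    ∑ j, (w j : ℝ) • (s j - weightedMean s w) = 0 := by
  have hW : totalWeight w ≠ 0 := (totalWeight_pos hw).ne'
  have h1 : ∑ j, (w j : ℝ) • weightedMean s w = totalWeight w • weightedMean s w := by
    rw [← Finset.sum_smul]; rfl
  have h2 : totalWeight w • weightedMean s w = ∑ j, (w j : ℝ) • s j := by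
    rw [weightedMean, smul_smul, mul_one_div, div_self hW, one_smul]
  simp only [smul_sub, Finset.sum_sub_distrib, h1, h2, sub_self]

lemma sum_pmf_smul_sub {w : ι → ℕ} (hw : 1 ≤ ∑ j, w j) (s : ι → EuclideanSpace ℝ (Fin d)) :
    ∑ j, pmfWeight w j • (s j - weightedMean s w) = 0 := by
  have hW : totalWeight w ≠ 0 := (totalWeight_pos hw).ne'
  have : ∀ j : ι, pmfWeight w j • (s j - weightedMean s w)
      = (1 / totalWeight w) • ((w j : ℝ) • (s j - weightedMean s w)) := by
    intro j
    rw [smul_smul, pmfWeight, div_eq_mul_inv, one_div, mul_comm]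
  simp only [this, ← Finset.smul_sum, sum_w_smul_sub hw s, smul_zero]

/-- Bias–variance decomposition. -/
lemma cost_eq {w : ι → ℕ} (hw : 1 ≤ ∑ j, w j) (s : ι → EuclideanSpace ℝ (Fin d))
    (c : EuclideanSpace ℝ (Fin d)) :
    ∑ j, (w j : ℝ) * ‖s j - c‖ ^ 2
      = weightedVar s w + totalWeight w * ‖c - weightedMean s w‖ ^ 2 := by
  set μ := weightedMean s w with hμ
  calc ∑ j, (w j : ℝ) * ‖s j - c‖ ^ 2
      = ∑ j, ((w j : ℝ) * ‖s j - μ‖ ^ 2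
          + 2 * ⟪(w j : ℝ) • (s j - μ), μ - c⟫
          + (w j : ℝ) * ‖μ - c‖ ^ 2) := by
        refine Finset.sum_congr rfl fun j _ => ?_
        have h : s j - c = (s j - μ) + (μ - c) := by abel
        rw [h, norm_add_sq_real, real_inner_smul_left]; ring
    _ = weightedVar s w + 2 * ⟪(∑ j, (w j : ℝ) • (s j - μ)), μ - c⟫
          + totalWeight w * ‖μ - c‖ ^ 2 := by
        rw [Finset.sum_add_distrib, Finset.sum_add_distrib, ← Finset.sum_mul,
          ← Finset.mul_sum, ← sum_inner]
        rfl
    _ = weightedVar s w + totalWeight w * ‖c - μ‖ ^ 2 := by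
        rw [sum_w_smul_sub hw s, inner_zero_left, norm_sub_rev]; ring

/-- Expected squared norm of the centered sum. -/
lemma exp_sq {w : ι → ℕ} (hw : 1 ≤ ∑ j, w j) (s : ι → EuclideanSpace ℝ (Fin d))
    (m : ℕ) :
    ∑ r : Fin m → ι, prodProb w r * ‖∑ t, (s (r t) - weightedMean s w)‖ ^ 2
      = (m : ℝ) * ∑ j, pmfWeight w j * ‖s j - weightedMean s w‖ ^ 2 := by
  set μ := weightedMean s w with hμ
  set σ2 := ∑ j, pmfWeight w j * ‖s j - μ‖ ^ 2 with hσ2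
  induction m with
  | zero => simp [prodProb]
  | succ m ih =>
    rw [← Equiv.sum_comp (Fin.consEquiv (fun _ : Fin (m+1) => ι))
      (fun r => prodProb w r * ‖∑ t, (s (r t) - μ)‖ ^ 2), Fintype.sum_prod_type]
    have hsplit : ∀ (j : ι) (r : Fin m → ι),
        prodProb w (Fin.consEquiv (fun _ : Fin (m+1) => ι) (j, r))
            * ‖∑ t : Fin (m+1), (s ((Fin.consEquiv (fun _ : Fin (m+1) => ι) (j, r)) t) - μ)‖ ^ 2
          = pmfWeight w j * ‖s j - μ‖ ^ 2 * prodProb w r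
            + 2 * ⟪pmfWeight w j • (s j - μ), prodProb w r • (∑ t : Fin m, (s (r t) - μ))⟫
            + pmfWeight w j * (prodProb w r * ‖∑ t : Fin m, (s (r t) - μ)‖ ^ 2) := by
      intro j r
      have h1 : prodProb w (Fin.consEquiv (fun _ : Fin (m+1) => ι) (j, r))
          = pmfWeight w j * prodProb w r := by
        simp [prodProb, Fin.prod_univ_succ, Fin.consEquiv]
      have h2 : ∑ t : Fin (m+1), (s ((Fin.consEquiv (fun _ : Fin (m+1) => ι) (j, r)) t) - μ)
          = (s j - μ) + ∑ t : Fin m, (s (r t) - μ) := by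
        simp only [Fin.sum_univ_succ, Fin.consEquiv_apply, Fin.cons_zero, Fin.cons_succ]
      rw [h1, h2, norm_add_sq_real, real_inner_smul_left, real_inner_smul_right]
      ring
    simp only [hsplit]
    simp only [Finset.sum_add_distrib]
    have hA : ∑ j : ι, ∑ r : Fin m → ι,
        pmfWeight w j * ‖s j - μ‖ ^ 2 * prodProb w r = σ2 := by
      simp only [← Finset.mul_sum, sum_prodProb hw m, mul_one]
      exact hσ2.symm
    have hB : ∑ j : ι, ∑ r : Fin m → ι,
        2 * ⟪pmfWeight w j • (s j - μ), prodProb w r • (∑ t : Fin m, (s (r t) - μ))⟫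
          = 0 := by
      simp only [← Finset.mul_sum, ← inner_sum, ← sum_inner]
      rw [sum_pmf_smul_sub hw s, inner_zero_left, mul_zero]
    have hC : ∑ j : ι, ∑ r : Fin m → ι,
        pmfWeight w j * (prodProb w r * ‖∑ t : Fin m, (s (r t) - μ)‖ ^ 2)
          = (m : ℝ) * σ2 := by
      simp only [← Finset.mul_sum, ih]
      rw [← Finset.sum_mul, pmfWeight_sum hw, one_mul]
    rw [hA, hB, hC]
    push_cast
    ring

lemma totalWeight_mul_sigma {w : ι → ℕ} (hw : 1 ≤ ∑ j, w j)
    (s : ι → EuclideanSpace ℝ (Fin d)) :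
    totalWeight w * ∑ j, pmfWeight w j * ‖s j - weightedMean s w‖ ^ 2
      = weightedVar s w := by
  have hW : totalWeight w ≠ 0 := (totalWeight_pos hw).ne'
  rw [Finset.mul_sum, weightedVar]
  refine Finset.sum_congr rfl fun j _ => ?_
  rw [pmfWeight]
  field_simp

lemma exp_cost {w : ι → ℕ} (hw : 1 ≤ ∑ j, w j) (s : ι → EuclideanSpace ℝ (Fin d))
    {m : ℕ} (hm : 1 ≤ m) :
    ∑ r : Fin m → ι, prodProb w r * (∑ j, (w j : ℝ) * ‖s j - sampleMean s r‖ ^ 2)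
      = (1 + 1 / (m : ℝ)) * weightedVar s w := by
  have hm0 : (m : ℝ) ≠ 0 := by positivity
  set μ := weightedMean s w with hμ
  have hsm : ∀ r : Fin m → ι,
      sampleMean s r - μ = (1 / (m : ℝ)) • ∑ t : Fin m, (s (r t) - μ) := by
    intro r
    rw [Finset.sum_sub_distrib, smul_sub, Finset.sum_const, Finset.card_univ,
      Fintype.card_fin, sampleMean]
    congr 1
    rw [← Nat.cast_smul_eq_nsmul ℝ m μ, smul_smul, one_div, inv_mul_cancel₀ hm0, one_smul]
  have hnorm : ∀ r : Fin m → ι,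
      ‖sampleMean s r - μ‖ ^ 2 = (1 / (m : ℝ) ^ 2) * ‖∑ t : Fin m, (s (r t) - μ)‖ ^ 2 := by
    intro r
    rw [hsm r, norm_smul]
    rw [Real.norm_eq_abs, abs_of_nonneg (by positivity : (0:ℝ) ≤ 1 / (m:ℝ))]
    rw [mul_pow]
    ring
  calc ∑ r : Fin m → ι, prodProb w r * (∑ j, (w j : ℝ) * ‖s j - sampleMean s r‖ ^ 2)
      = ∑ r : Fin m → ι, (prodProb w r * weightedVar s w
          + (totalWeight w / (m : ℝ) ^ 2)
            * (prodProb w r * ‖∑ t : Fin m, (s (r t) - μ)‖ ^ 2)) := by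
        refine Finset.sum_congr rfl fun r _ => ?_
        rw [cost_eq hw s, hnorm r]
        ring
    _ = weightedVar s w + (totalWeight w / (m : ℝ) ^ 2)
          * ((m : ℝ) * ∑ j, pmfWeight w j * ‖s j - μ‖ ^ 2) := by
        rw [Finset.sum_add_distrib, ← Finset.sum_mul, sum_prodProb hw m, one_mul,
          ← Finset.mul_sum, exp_sq hw s m]
    _ = weightedVar s w + (1 / (m : ℝ))
          * (totalWeight w * ∑ j, pmfWeight w j * ‖s j - μ‖ ^ 2) := by
        field_simp
    _ = (1 + 1 / (m : ℝ)) * weightedVar s w := by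
        rw [hμ, totalWeight_mul_sigma hw s]
        ring

lemma exists_good {w : ι → ℕ} (hw : 1 ≤ ∑ j, w j) (s : ι → EuclideanSpace ℝ (Fin d))
    {m : ℕ} (hm : 1 ≤ m) :
    ∃ r : Fin m → ι, ∑ j, (w j : ℝ) * ‖s j - sampleMean s r‖ ^ 2
      ≤ (1 + 1 / (m : ℝ)) * weightedVar s w := by
  by_contra h
  push_neg at h
  set C := (1 + 1 / (m : ℝ)) * weightedVar s w with hC
  have hex : ∃ r : Fin m → ι, prodProb w r ≠ 0 := by
    by_contra h0
    push_neg at h0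
    have := sum_prodProb hw m
    rw [Finset.sum_eq_zero (fun r _ => h0 r)] at this
    norm_num at this
  obtain ⟨r0, hr0⟩ := hex
  have hr0' : 0 < prodProb w r0 := lt_of_le_of_ne (prodProb_nonneg hw r0) (Ne.symm hr0)
  have hlt : ∑ r : Fin m → ι, prodProb w r * C
      < ∑ r : Fin m → ι, prodProb w r * (∑ j, (w j : ℝ) * ‖s j - sampleMean s r‖ ^ 2) := by
    refine Finset.sum_lt_sum (fun r _ => ?_) ⟨r0, Finset.mem_univ r0, ?_⟩
    · exact mul_le_mul_of_nonneg_left (h r).le (prodProb_nonneg hw r)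
    · exact mul_lt_mul_of_pos_left (h r0) hr0'
  rw [← Finset.sum_mul, sum_prodProb hw m, one_mul, exp_cost hw s hm] at hlt
  exact absurd hlt (lt_irrefl _)

end Aux

theorem exists_good_sample_centers_for_clustering {d : ℕ} {ι : Type*}
    [Fintype ι] [Nonempty ι] (s : ι → EuclideanSpace ℝ (Fin d))
    {k : ℕ} (hk : 1 ≤ k) (w : Fin k → ι → ℕ) (hw : ∀ i, 1 ≤ ∑ j, w i j)
    {ε : ℝ} (hε : 0 < ε) {m : ℕ} (hm : 1 / ε < (m : ℝ)) :
    ∃ r : Fin k → (Fin m → ι),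
      ∑ i, ∑ j, (w i j : ℝ) * ‖s j - sampleMean s (r i)‖ ^ 2 ≤
        (1 + ε) * ∑ i, weightedVar s (w i) := by
  have hmpos : (0:ℝ) < (m : ℝ) := lt_trans (by positivity) hm
  have hm1 : 1 ≤ m := by exact_mod_cast Nat.one_le_iff_ne_zero.mpr (by
    intro h; rw [h] at hmpos; norm_num at hmpos)
  have hinv : 1 / (m : ℝ) < ε := by
    rw [div_lt_iff₀ hmpos]
    rw [div_lt_iff₀ hε] at hm
    linarith
  choose r hr using fun i => exists_good (hw i) s (m := m) hm1
  refine ⟨r, ?_⟩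
  calc ∑ i, ∑ j, (w i j : ℝ) * ‖s j - sampleMean s (r i)‖ ^ 2
      ≤ ∑ i, (1 + ε) * weightedVar s (w i) := by
        refine Finset.sum_le_sum fun i _ => le_trans (hr i) ?_
        have hV : 0 ≤ weightedVar s (w i) :=
          Finset.sum_nonneg fun j _ => by positivity
        nlinarith
    _ = (1 + ε) * ∑ i, weightedVar s (w i) := by rw [Finset.mul_sum]
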